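/- For a diagonalizable self-adjoint matrix tuple and a C^1 real function f, if a polynomial p agrees with f to first order at the joint spectrum of S(t*) and the joint eigenvalues of S(t) are Lipschitz in t, then ‖F(S(t)) − P(S(t))‖ = o(|t − t*|), where F, P are the induced matrix functions. -/

import Mathlib

open Matrix Asymptotics Filter

lemma aux_mvpoly_differentiable (d : ℕ) (P : MvPolynomial (Fin d) ℝ) :
    Differentiable ℝ (fun y : Fin d → ℝ => MvPolynomial.eval y P) := by
  induction P using MvPolynomial.induction_on with
  | C a => simpa using differentiable_const a
  | add p q hp hq => simp only [_root_.map_add]; exact hp.add hq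
  | mul_X p i hp =>
      simp only [_root_.map_mul, MvPolynomial.eval_X]
      exact hp.mul ((ContinuousLinearMap.proj i :
        (Fin d → ℝ) →L[ℝ] ℝ).differentiable)

open scoped Matrix.Norms.L2Operator in
lemma aux_diag_norm_le {n : ℕ} [Nonempty (Fin n)] (v : Fin n → ℂ) :
    ‖(Matrix.toEuclideanCLM (𝕜 := ℂ) (n := Fin n)) (Matrix.diagonal v)‖ ≤ ⨆ i, ‖v i‖ := by
  set C := ⨆ i, ‖v i‖ with hC
  have hble : ∀ i, ‖v i‖ ≤ C := fun i =>
    le_ciSup (f := fun i => ‖v i‖) (Set.Finite.bddAbove (Set.finite_range _)) i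
  have hC0 : 0 ≤ C := (norm_nonneg _).trans (hble (Classical.arbitrary _))
  apply ContinuousLinearMap.opNorm_le_bound _ hC0
  intro y
  have hcomp : ∀ i, (Matrix.toEuclideanCLM (𝕜 := ℂ) (n := Fin n)) (Matrix.diagonal v) y i
      = v i * y i := by
    intro i
    have h := congrFun (Matrix.ofLp_toEuclideanCLM (𝕜 := ℂ) (Matrix.diagonal v) y) i
    simpa [Matrix.mulVec_diagonal] using h
  rw [EuclideanSpace.norm_eq, EuclideanSpace.norm_eq, ← Real.sqrt_sq hC0,
    ← Real.sqrt_mul (sq_nonneg C)]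
  apply Real.sqrt_le_sqrt
  rw [Finset.mul_sum]
  apply Finset.sum_le_sum
  intro i _
  rw [hcomp i, norm_mul, mul_pow]
  exact mul_le_mul_of_nonneg_right
    (pow_le_pow_left₀ (norm_nonneg _) (hble i) 2) (sq_nonneg _)

open scoped Matrix.Norms.L2Operator in
lemma aux_norm_le (n : ℕ) (v : Fin n → ℂ) (Uu : Matrix (Fin n) (Fin n) ℂ)
    (hU : Uu ∈ Matrix.unitaryGroup (Fin n) ℂ) :
    ‖(Matrix.toEuclideanCLM (𝕜 := ℂ) (n := Fin n)) (Uu * Matrix.diagonal v * Uuᴴ)‖ ≤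
      ⨆ i, ‖v i‖ := by
  rcases isEmpty_or_nonempty (Fin n) with hn | hn
  · have h0 : Uu * Matrix.diagonal v * Uuᴴ = 0 := Subsingleton.elim _ _
    rw [h0, map_zero, norm_zero, Real.iSup_of_isEmpty]
  · have hnt : Nontrivial (Matrix (Fin n) (Fin n) ℂ) := by infer_instance
    have hnorm : ∀ i, (0:ℝ) ≤ ‖v i‖ := fun i => norm_nonneg _
    have hsup0 : (0:ℝ) ≤ ⨆ i, ‖v i‖ :=
      (norm_nonneg (v (Classical.arbitrary _))).trans
        (le_ciSup (f := fun i => ‖v i‖) (Set.Finite.bddAbove (Set.finite_range _))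
          (Classical.arbitrary _))
    have key : ‖Uu * Matrix.diagonal v * Uuᴴ‖ ≤ ⨆ i, ‖v i‖ := by
      calc ‖Uu * Matrix.diagonal v * Uuᴴ‖
          ≤ ‖Uu * Matrix.diagonal v‖ * ‖Uuᴴ‖ := Matrix.l2_opNorm_mul _ _
        _ ≤ (‖Uu‖ * ‖Matrix.diagonal v‖) * ‖Uuᴴ‖ := by
            gcongr; exact Matrix.l2_opNorm_mul _ _
        _ = ‖Matrix.diagonal v‖ := by
            rw [Matrix.l2_opNorm_conjTranspose, CStarRing.norm_of_mem_unitary hU]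
            ring
        _ ≤ ⨆ i, ‖v i‖ := by
            rw [Matrix.cstar_norm_def]
            exact aux_diag_norm_le v
    exact key
/-- If the polynomial `p` agrees with the `C^1` function `f` to first order
at the joint spectrum of `S(t*)`, and the joint eigenvalue curves `x_i(t)` are Lipschitz,
then `‖F(S(t)) − P(S(t))‖ ≤ max_i |(f−p)(x_i(t)) − (f−p)(x_i(t*))| = o(|t − t*|)`,
where `F, P` are the induced matrix functions and `‖·‖` is the operator norm. -/
theorem stmt8 (d n : ℕ) (Ω : Set (Fin d → ℝ)) (hΩ : IsOpen Ω)
    (f : (Fin d → ℝ) → ℝ) (hf : ContDiffOn ℝ 1 f Ω)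
    (P : MvPolynomial (Fin d) ℝ) (p : (Fin d → ℝ) → ℝ)
    (hpdef : p = fun y => MvPolynomial.eval y P)
    (t₀ : ℝ) (x : Fin n → ℝ → Fin d → ℝ) (K : NNReal)
    (hxLip : ∀ i, LipschitzWith K (x i))
    (hxΩ : ∀ i t, x i t ∈ Ω)
    (hagree : ∀ i, p (x i t₀) = f (x i t₀))
    (hagree' : ∀ i, fderivWithin ℝ p Ω (x i t₀) = fderivWithin ℝ f Ω (x i t₀))
    (U : ℝ → Matrix (Fin n) (Fin n) ℂ)
    (hU : ∀ t, U t ∈ Matrix.unitaryGroup (Fin n) ℂ)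
    (FS PS : ℝ → Matrix (Fin n) (Fin n) ℂ)
    (hFS : ∀ t, FS t = U t * Matrix.diagonal (fun i => (f (x i t) : ℂ)) * (U t)ᴴ)
    (hPS : ∀ t, PS t = U t * Matrix.diagonal (fun i => (p (x i t) : ℂ)) * (U t)ᴴ) :
    (∀ t, ‖(Matrix.toEuclideanCLM (𝕜 := ℂ) (n := Fin n)) (FS t - PS t)‖ ≤
        ⨆ i, |(f (x i t) - p (x i t)) - (f (x i t₀) - p (x i t₀))|) ∧
    (fun t => (Matrix.toEuclideanCLM (𝕜 := ℂ) (n := Fin n)) (FS t - PS t))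
      =o[nhds t₀] fun t => t - t₀ := by
  have hg0 : ∀ i, f (x i t₀) - p (x i t₀) = 0 := fun i => by rw [hagree i]; ring
  have hM : ∀ t, FS t - PS t =
      U t * Matrix.diagonal (fun i => ((f (x i t) - p (x i t) : ℝ) : ℂ)) * (U t)ᴴ := by
    intro t
    rw [hFS t, hPS t, ← sub_mul, ← Matrix.mul_sub, Matrix.diagonal_sub]
    congr 2
    funext i
    push_cast
    ring
  -- Part 1
  have hbound : ∀ t, ‖(Matrix.toEuclideanCLM (𝕜 := ℂ) (n := Fin n)) (FS t - PS t)‖ ≤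
      ⨆ i, |(f (x i t) - p (x i t)) - (f (x i t₀) - p (x i t₀))| := by
    intro t
    have h := aux_norm_le n (fun i => ((f (x i t) - p (x i t) : ℝ) : ℂ)) (U t) (hU t)
    rw [hM t]
    simp only [Complex.norm_real, Real.norm_eq_abs] at h
    simpa only [hg0, sub_zero] using h
  refine ⟨hbound, ?_⟩
  -- Part 2: each eigenvalue curve term is o(t - t₀)
  have hlittle : ∀ i : Fin n,
      (fun t => (f (x i t) - p (x i t)) - (f (x i t₀) - p (x i t₀)))
        =o[nhds t₀] fun t => t - t₀ := by
    intro i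
    have hmem : Ω ∈ nhds (x i t₀) := hΩ.mem_nhds (hxΩ i t₀)
    have hfd : DifferentiableAt ℝ f (x i t₀) :=
      ((hf.contDiffAt hmem).differentiableAt one_ne_zero)
    have hpd : DifferentiableAt ℝ p (x i t₀) := by
      rw [hpdef]; exact (aux_mvpoly_differentiable d P).differentiableAt
    have hfw : fderivWithin ℝ f Ω (x i t₀) = fderiv ℝ f (x i t₀) :=
      fderivWithin_of_isOpen hΩ (hxΩ i t₀)
    have hpw : fderivWithin ℝ p Ω (x i t₀) = fderiv ℝ p (x i t₀) :=
      fderivWithin_of_isOpen hΩ (hxΩ i t₀)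
    have hzero : fderiv ℝ f (x i t₀) - fderiv ℝ p (x i t₀) = 0 := by
      rw [← hfw, ← hpw, ← hagree' i, sub_self]
    have hHasD : HasFDerivAt (fun y => f y - p y) (0 : (Fin d → ℝ) →L[ℝ] ℝ) (x i t₀) := by
      have := hfd.hasFDerivAt.sub hpd.hasFDerivAt
      rwa [hzero] at this
    have hlo0 : (fun y => (f y - p y) - (f (x i t₀) - p (x i t₀)))
        =o[nhds (x i t₀)] fun y => y - x i t₀ := by
      simpa using hHasD.isLittleO
    have htend : Filter.Tendsto (x i) (nhds t₀) (nhds (x i t₀)) :=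
      ((hxLip i).continuous.continuousAt)
    have hcomp := hlo0.comp_tendsto htend
    have hO : (fun t => x i t - x i t₀) =O[nhds t₀] fun t => t - t₀ := by
      refine IsBigO.of_bound K (Filter.Eventually.of_forall fun t => ?_)
      have := (hxLip i).dist_le_mul t t₀
      simpa [dist_eq_norm] using this
    exact hcomp.trans_isBigO hO
  have hsum : (fun t => ∑ i : Fin n,
      |(f (x i t) - p (x i t)) - (f (x i t₀) - p (x i t₀))|) =o[nhds t₀] fun t => t - t₀ := by
    apply Asymptotics.IsLittleO.fun_sum
    intro i _
    simpa [Real.norm_eq_abs] using (hlittle i).norm_left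
  refine IsBigO.trans_isLittleO ?_ hsum
  apply IsBigO.of_bound 1
  filter_upwards with t
  rw [one_mul, Real.norm_eq_abs,
    abs_of_nonneg (Finset.sum_nonneg fun i _ => abs_nonneg _)]
  refine (hbound t).trans ?_
  rcases isEmpty_or_nonempty (Fin n) with hn | hn
  · rw [Real.iSup_of_isEmpty]
    exact Finset.sum_nonneg fun i _ => abs_nonneg _
  · exact ciSup_le fun i => Finset.single_le_sum
      (f := fun j => |(f (x j t) - p (x j t)) - (f (x j t₀) - p (x j t₀))|)
      (fun j _ => abs_nonneg _) (Finset.mem_univ i)
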